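/- For d ≥ 5, 1 ≤ c ≤ d−1, and n = dk (k a positive integer), let U₁,…,U_k partition an n-set V into d-sets, and for each i pick any family G_i ⊆ 2^{U_i} with |G_i| = c−1 not containing the empty set. Then the family F = {A ⊆ V : A ∈ 2^{U_i} ∖ G_i for some i} ∪ {∅} satisfies |F| = (n/d)(2^d − c) + 1 and every vertex of V has degree at least 2^{d−1} − c + 1 in F (the degree when G_i consists of sets avoiding the vertex being exactly 2^{d−1}). -/

import Mathlib

open Finset

/-- The degree of `x` in `F`. -/
def deg {α : Type*} [DecidableEq α] (F : Finset (Finset α)) (x : α) : ℕ :=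
  (F.filter (fun A => x ∈ A)).card

lemma card_powerset_filter_mem {α : Type*} [DecidableEq α] (s : Finset α) (x : α)
    (hx : x ∈ s) : (s.powerset.filter (fun A => x ∈ A)).card = 2 ^ (s.card - 1) := by
  classical
  have h : s.powerset.filter (fun A => x ∈ A) = (s.erase x).powerset.image (insert x) := by
    ext A
    simp only [mem_filter, mem_powerset, mem_image]
    constructor
    · rintro ⟨hA, hxA⟩
      exact ⟨A.erase x, fun y hy => mem_erase.2 ⟨(mem_erase.1 hy).1, hA (mem_erase.1 hy).2⟩,
        by rw [insert_erase hxA]⟩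
    · rintro ⟨B, hB, rfl⟩
      refine ⟨insert_subset hx fun y hy => (mem_erase.1 (hB hy)).2, mem_insert_self _ _⟩
  rw [h, Finset.card_image_of_injOn, card_powerset, card_erase_of_mem hx]
  intro A hA B hB hAB
  simp only [coe_powerset, Set.mem_setOf_eq, Set.mem_preimage, mem_coe, mem_powerset] at hA hB
  have hxA : x ∉ A := fun h => (mem_erase.1 (hA h)).1 rfl
  have hxB : x ∉ B := fun h => (mem_erase.1 (hB h)).1 rfl
  rw [← erase_insert hxA, ← erase_insert hxB, hAB]

/-- Construction 2.3. Partition an `n`-set `V` into `k` blocks of size `d`,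
remove `c-1` nonempty sets from each block's powerset.  The resulting family has
`(n/d)(2^d - c) + 1` members and minimum degree at least `2^{d-1} - c + 1`; a vertex
avoided by all removed sets of its block has degree exactly `2^{d-1}`. -/
theorem stmt_8 {α : Type*} [DecidableEq α] (d c k n : ℕ)
    (hd : 5 ≤ d) (hc1 : 1 ≤ c) (hcd : c ≤ d - 1) (hk : 1 ≤ k) (hn : n = d * k)
    (V : Finset α) (hV : V.card = n)
    (U : Fin k → Finset α)
    (hUV : ∀ i, U i ⊆ V)
    (hdisj : ∀ i j, i ≠ j → Disjoint (U i) (U j))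
    (hcover : Finset.univ.biUnion U = V)
    (hsize : ∀ i, (U i).card = d)
    (G : Fin k → Finset (Finset α))
    (hG : ∀ i, G i ⊆ (U i).powerset)
    (hGcard : ∀ i, (G i).card = c - 1)
    (hGne : ∀ i, (∅ : Finset α) ∉ G i) :
    let F := Finset.univ.biUnion (fun i => (U i).powerset \ G i) ∪ {∅}
    F.card = (n / d) * (2 ^ d - c) + 1
    ∧ (∀ x ∈ V, 2 ^ (d - 1) - c + 1 ≤ deg F x)
    ∧ (∀ x ∈ V, (∀ i, ∀ A ∈ G i, x ∉ A) → deg F x = 2 ^ (d - 1)) := by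
  classical
  intro F
  have hd0 : 0 < d := by omega
  have hc2d : c < 2 ^ d := by
    calc c ≤ d - 1 := hcd
    _ < 2 ^ d := by
      have := (Nat.lt_two_pow_self (n := d))
      omega
  have hc2d1 : c ≤ 2 ^ (d - 1) := by
    have h1 : d - 1 < 2 ^ (d - 1) := Nat.lt_two_pow_self
    omega
  -- block card
  have hBcard : ∀ i, ((U i).powerset \ G i).card = 2 ^ d - (c - 1) := by
    intro i
    rw [card_sdiff_of_subset (hG i), card_powerset, hsize i, hGcard i]
  -- unique block containing x
  -- degree computation
  have hdeg : ∀ (i : Fin k) (x : α), x ∈ U i →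
      deg F x = ((U i).powerset.filter (fun A => x ∈ A)).card
        - ((G i).filter (fun A => x ∈ A)).card := by
    intro i x hx
    simp only [F]
    unfold deg
    rw [filter_union, filter_biUnion]
    have h1 : Finset.filter (fun A => x ∈ A) {(∅ : Finset α)} = ∅ := by
      rw [filter_singleton]
      simp
    rw [h1, union_empty]
    have h2 : ∀ j : Fin k, j ≠ i →
        Finset.filter (fun A => x ∈ A) ((U j).powerset \ G j) = ∅ := by
      intro j hj
      rw [filter_eq_empty_iff]
      intro A hA hxA
      have hAj : A ⊆ U j := mem_powerset.1 (mem_sdiff.1 hA).1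
      exact absurd ((hdisj j i hj).le_bot (mem_inter.2 ⟨hAj hxA, hx⟩)) (notMem_empty _)
    rw [Finset.biUnion_congr rfl (fun j _ => rfl)]
    have : (Finset.univ : Finset (Fin k)).biUnion
        (fun j => Finset.filter (fun A => x ∈ A) ((U j).powerset \ G j))
        = Finset.filter (fun A => x ∈ A) ((U i).powerset \ G i) := by
      apply Finset.Subset.antisymm
      · intro A hA
        rcases mem_biUnion.1 hA with ⟨j, _, hAj⟩
        by_cases hji : j = i
        · rwa [hji] at hAj
        · rw [h2 j hji] at hAj; exact absurd hAj (notMem_empty _)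
      · intro A hA
        exact mem_biUnion.2 ⟨i, mem_univ _, hA⟩
    have heq : Finset.filter (fun A => x ∈ A) ((U i).powerset \ G i)
        = (U i).powerset.filter (fun A => x ∈ A) \ (G i).filter (fun A => x ∈ A) := by
      ext A
      simp only [mem_filter, mem_sdiff]
      tauto
    rw [this, heq, card_sdiff_of_subset (filter_subset_filter _ (hG i))]
  constructor
  · -- cardinality
    have hFeq : F = (Finset.univ.biUnion
        (fun i => ((U i).powerset \ G i).erase ∅)) ∪ {∅} := by
      simp only [F]
      ext A
      simp only [mem_union, mem_biUnion, mem_erase, mem_singleton, mem_univ, true_and]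
      constructor
      · rintro (⟨i, hi⟩ | h)
        · by_cases hA : A = ∅
          · exact Or.inr hA
          · exact Or.inl ⟨i, hA, hi⟩
        · exact Or.inr h
      · rintro (⟨i, _, hi⟩ | rfl)
        · exact Or.inl ⟨i, hi⟩
        · exact Or.inl ⟨⟨0, by omega⟩, mem_sdiff.2 ⟨by simp, hGne _⟩⟩
    rw [hFeq, card_union_of_disjoint, Finset.card_biUnion]
    · have : ∀ i ∈ (Finset.univ : Finset (Fin k)),
          (((U i).powerset \ G i).erase ∅).card = 2 ^ d - c := by
        intro i _
        rw [card_erase_of_mem, hBcard i]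
        · omega
        · exact mem_sdiff.2 ⟨by simp, hGne i⟩
      rw [Finset.sum_congr rfl this, Finset.sum_const, card_univ, Fintype.card_fin,
        card_singleton, hn, smul_eq_mul]
      congr 2
      rw [Nat.mul_div_cancel_left k hd0]
    · intro i _ j _ hij
      apply Finset.disjoint_left.2
      intro A hAi hAj
      have h1 : A ⊆ U i := mem_powerset.1 (mem_sdiff.1 (mem_erase.1 hAi).2).1
      have h2 : A ⊆ U j := mem_powerset.1 (mem_sdiff.1 (mem_erase.1 hAj).2).1
      have : A = ∅ := by
        rw [← subset_empty]
        intro y hy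
        exact absurd ((hdisj i j hij).le_bot (mem_inter.2 ⟨h1 hy, h2 hy⟩)) (notMem_empty _)
      exact (mem_erase.1 hAi).1 this
    · rw [disjoint_singleton_right]
      simp only [mem_biUnion, mem_erase, not_exists]
      intro i h
      exact h.2.1 rfl
  constructor
  · intro x hx
    rw [← hcover] at hx
    rcases mem_biUnion.1 hx with ⟨i, _, hxi⟩
    rw [hdeg i x hxi, card_powerset_filter_mem _ _ hxi, hsize i]
    have h1 : ((G i).filter (fun A => x ∈ A)).card ≤ c - 1 := by
      rw [← hGcard i]; exact card_filter_le _ _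
    omega
  · intro x hx hGx
    rw [← hcover] at hx
    rcases mem_biUnion.1 hx with ⟨i, _, hxi⟩
    rw [hdeg i x hxi, card_powerset_filter_mem _ _ hxi, hsize i]
    have : (G i).filter (fun A => x ∈ A) = ∅ := by
      rw [filter_eq_empty_iff]
      exact fun A hA => hGx i A hA
    rw [this, card_empty, Nat.sub_zero]
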